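/- Let d be a positive integer, (β_n)_{n≥0} a sequence of nonnegative reals with Q(t) := Σ_{n=0}^∞ β_n t^n, and p > 1. On a probability space, let N be a random variable taking values in the nonnegative integers with P(N = n) = (p−1)/p^{n+1} for every n ∈ ℕ, and let (X_j)_{j≥1} be i.i.d. ℝ^d-valued random vectors, independent of N, with E[‖X_1‖²] ≤ B for some B ≥ 0 such that Q(pB) < ∞. Then E[ β_N · (p^{2N+2}/(p−1)²) · ∏_{j=1}^N ‖X_j‖² ] ≤ (p/(p−1)) · Q(pB). -/

import Mathlib

open MeasureTheory ProbabilityTheory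
open scoped ENNReal

/-- **Lemma 3 (second-moment bound for the feature-map estimate).** Fix `p > 1`,
nonnegative coefficients `β` with `Q(t) = Σ β_n tⁿ`, a geometric random variable `N`
with parameter `p`, and i.i.d. random vectors `(X_j)` in `ℝ^d` independent of `N`
with `E[‖X₁‖²] ≤ B` and `Q(pB) < ∞`. Then
`E[β_N · (p^(2N+2)/(p-1)²) · ∏_{j=1}^N ‖X_j‖²] ≤ (p/(p-1)) · Q(pB)`. -/
theorem feature_map_estimate_second_moment
    {Ω : Type*} [MeasurableSpace Ω] (μ : Measure Ω) [IsProbabilityMeasure μ]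
    (d : ℕ) (hd : 0 < d)
    (β : ℕ → ℝ) (hβ : ∀ n, 0 ≤ β n)
    (p : ℝ) (hp : 1 < p)
    (N : Ω → ℕ) (hN : Measurable N)
    (hNdist : ∀ n : ℕ, μ {ω | N ω = n} = ENNReal.ofReal ((p - 1) / p ^ (n + 1)))
    (X : ℕ → Ω → EuclideanSpace ℝ (Fin d)) (hXm : ∀ j, Measurable (X j))
    (hXindep : iIndepFun X μ)
    (hXid : ∀ j, μ.map (X j) = μ.map (X 0))
    (hNX : IndepFun N (fun ω => fun j => X j ω) μ)
    (B : ℝ) (hB : 0 ≤ B)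
    (hXsq : Integrable (fun ω => ‖X 0 ω‖ ^ 2) μ)
    (hX2 : ∫ ω, ‖X 0 ω‖ ^ 2 ∂μ ≤ B)
    (hQ : Summable (fun n : ℕ => β n * (p * B) ^ n)) :
    ∫⁻ ω, ENNReal.ofReal
        (β (N ω) * (p ^ (2 * N ω + 2) / (p - 1) ^ 2) *
          ∏ j ∈ Finset.range (N ω), ‖X j ω‖ ^ 2) ∂μ
      ≤ ENNReal.ofReal ((p / (p - 1)) * ∑' n : ℕ, β n * (p * B) ^ n) := by
  have hp0 : (0:ℝ) < p := lt_trans one_pos hp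
  have hp1 : (0:ℝ) < p - 1 := sub_pos.2 hp
  set Y : ℕ → Ω → ℝ≥0∞ := fun j ω => ENNReal.ofReal (‖X j ω‖ ^ 2) with hY
  have hYm : ∀ j, Measurable (Y j) := fun j => ((hXm j).norm.pow_const 2).ennreal_ofReal
  have hYindep : iIndepFun Y μ :=
    hXindep.comp (fun _ x => ENNReal.ofReal (‖x‖^2))
      (fun _ => (measurable_norm.pow_const 2).ennreal_ofReal)
  have hYint : ∀ j, ∫⁻ ω, Y j ω ∂μ = ∫⁻ ω, Y 0 ω ∂μ := by
    intro j
    have h1 : ∫⁻ ω, Y j ω ∂μ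
        = ∫⁻ x, ENNReal.ofReal (‖x‖^2) ∂(μ.map (X j)) :=
      (lintegral_map (measurable_norm.pow_const 2).ennreal_ofReal (hXm j)).symm
    have h2 : ∫⁻ ω, Y 0 ω ∂μ
        = ∫⁻ x, ENNReal.ofReal (‖x‖^2) ∂(μ.map (X 0)) :=
      (lintegral_map (measurable_norm.pow_const 2).ennreal_ofReal (hXm 0)).symm
    rw [h1, h2, hXid j]
  have hY0 : ∫⁻ ω, Y 0 ω ∂μ ≤ ENNReal.ofReal B := by
    rw [hY]
    rw [← ofReal_integral_eq_lintegral_ofReal hXsq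
      (Filter.Eventually.of_forall fun ω => sq_nonneg _)]
    exact ENNReal.ofReal_le_ofReal hX2
  -- product formula via independence
  have hprod : ∀ n, ∫⁻ ω, ∏ j ∈ Finset.range n, Y j ω ∂μ
      = ∏ j ∈ Finset.range n, ∫⁻ ω, Y j ω ∂μ := by
    intro n
    induction n with
    | zero => simp
    | succ n ih =>
      have hind : IndepFun (fun ω => ∏ j ∈ Finset.range n, Y j ω) (Y n) μ :=
        (hYindep.indepFun_prod_range_succ hYm n).congr
          (Filter.Eventually.of_forall fun ω => by simp) (Filter.Eventually.of_forall fun _ => rfl)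
      have key := lintegral_mul_eq_lintegral_mul_lintegral_of_indepFun
        (Finset.measurable_prod _ fun j _ => hYm j) (hYm n) hind
      simp only [Finset.prod_range_succ]
      rw [← ih]
      exact key
  have hprodle : ∀ n, ∫⁻ ω, ∏ j ∈ Finset.range n, Y j ω ∂μ ≤ (ENNReal.ofReal B) ^ n := by
    intro n
    rw [hprod n]
    calc ∏ j ∈ Finset.range n, ∫⁻ ω, Y j ω ∂μ
        ≤ ∏ j ∈ Finset.range n, ENNReal.ofReal B :=
          Finset.prod_le_prod' fun j _ => (hYint j ▸ hY0 : ∫⁻ ω, Y j ω ∂μ ≤ _)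
      _ = (ENNReal.ofReal B) ^ n := by simp
  have hsm : ∀ n : ℕ, MeasurableSet {ω | N ω = n} := fun n => hN (measurableSet_singleton n)
  -- restricted integral via independence of N and X
  have hrest : ∀ n, ∫⁻ ω in {ω | N ω = n}, ∏ j ∈ Finset.range n, Y j ω ∂μ
      = μ {ω | N ω = n} * ∫⁻ ω, ∏ j ∈ Finset.range n, Y j ω ∂μ := by
    intro n
    set φ : ℕ → ℝ≥0∞ := fun k => if k = n then 1 else 0 with hφ
    set ψ : (ℕ → EuclideanSpace ℝ (Fin d)) → ℝ≥0∞ :=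
      fun v => ∏ j ∈ Finset.range n, ENNReal.ofReal (‖v j‖^2) with hψ
    have hφm : Measurable φ := measurable_from_top
    have hψm : Measurable ψ :=
      Finset.measurable_prod _ fun j _ =>
        ((measurable_pi_apply j).norm.pow_const 2).ennreal_ofReal
    have hind : IndepFun (φ ∘ N) (ψ ∘ (fun ω => fun j => X j ω)) μ := hNX.comp hφm hψm
    have key := lintegral_mul_eq_lintegral_mul_lintegral_of_indepFun
      (hφm.comp hN) (hψm.comp (measurable_pi_lambda _ hXm)) hind
    simp only [Pi.mul_apply, Function.comp_apply] at key
    have hpt : (Set.indicator {ω | N ω = n} fun ω => ∏ j ∈ Finset.range n, Y j ω)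
        = fun ω => φ (N ω) * ψ (fun j => X j ω) := by
      funext ω
      by_cases h : N ω = n <;> simp [hφ, hψ, hY, Set.indicator, h]
    have hφint : ∫⁻ ω, φ (N ω) ∂μ = μ {ω | N ω = n} := by
      have h : (fun ω => φ (N ω)) = Set.indicator {ω | N ω = n} (fun _ => (1:ℝ≥0∞)) := by
        funext ω; by_cases h : N ω = n <;> simp [hφ, Set.indicator, h]
      rw [h, lintegral_indicator (hsm n)]
      simp
    have hψeq : ∫⁻ ω, ψ (fun j => X j ω) ∂μ = ∫⁻ ω, ∏ j ∈ Finset.range n, Y j ω ∂μ := rfl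
    rw [← lintegral_indicator (hsm n), hpt, key, hφint, hψeq]
  -- coefficients
  set c : ℕ → ℝ := fun n => β n * (p ^ (2 * n + 2) / (p - 1) ^ 2) with hc
  have hcnn : ∀ n, 0 ≤ c n := fun n =>
    mul_nonneg (hβ n) (div_nonneg (pow_nonneg hp0.le _) (sq_nonneg _))
  -- decompose integrand as a tsum of indicators
  have hdecomp : ∀ ω, ENNReal.ofReal
      (β (N ω) * (p ^ (2 * N ω + 2) / (p - 1) ^ 2) * ∏ j ∈ Finset.range (N ω), ‖X j ω‖ ^ 2)
      = ∑' n : ℕ, Set.indicator {ω' | N ω' = n}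
          (fun ω' => ENNReal.ofReal (c n) * ∏ j ∈ Finset.range n, Y j ω') ω := by
    intro ω
    have hz : ∀ n, n ≠ N ω → Set.indicator {ω' | N ω' = n}
        (fun ω' => ENNReal.ofReal (c n) * ∏ j ∈ Finset.range n, Y j ω') ω = 0 :=
      fun n hn => by
        apply Set.indicator_of_notMem
        exact fun h => hn (Eq.symm h)
    rw [tsum_eq_single (N ω) hz]
    have : ω ∈ {ω' | N ω' = N ω} := rfl
    rw [Set.indicator_of_mem this]
    rw [ENNReal.ofReal_mul (hcnn (N ω))]
    congr 1
    exact ENNReal.ofReal_prod_of_nonneg fun j _ => sq_nonneg _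
  calc ∫⁻ ω, ENNReal.ofReal
        (β (N ω) * (p ^ (2 * N ω + 2) / (p - 1) ^ 2) *
          ∏ j ∈ Finset.range (N ω), ‖X j ω‖ ^ 2) ∂μ
      = ∑' n : ℕ, ∫⁻ ω, Set.indicator {ω' | N ω' = n}
          (fun ω' => ENNReal.ofReal (c n) * ∏ j ∈ Finset.range n, Y j ω') ω ∂μ := by
        rw [lintegral_congr hdecomp]
        exact lintegral_tsum fun n =>
          ((measurable_const.mul (Finset.measurable_prod _ fun j _ => hYm j)).indicator
            (hsm n)).aemeasurable
    _ = ∑' n : ℕ, ENNReal.ofReal (c n) *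
          (μ {ω | N ω = n} * ∫⁻ ω, ∏ j ∈ Finset.range n, Y j ω ∂μ) := by
        refine tsum_congr fun n => ?_
        rw [lintegral_indicator (hsm n), lintegral_const_mul _
          (Finset.measurable_prod _ fun j _ => hYm j), hrest n]
    _ ≤ ∑' n : ℕ, ENNReal.ofReal (c n) *
          (ENNReal.ofReal ((p - 1) / p ^ (n + 1)) * (ENNReal.ofReal B) ^ n) := by
        refine ENNReal.tsum_le_tsum fun n => mul_le_mul_right ?_ _
        rw [hNdist n]
        exact mul_le_mul_right (hprodle n) _
    _ = ∑' n : ℕ, ENNReal.ofReal ((p / (p - 1)) * (β n * (p * B) ^ n)) := by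
        refine tsum_congr fun n => ?_
        rw [← ENNReal.ofReal_pow hB, ← ENNReal.ofReal_mul
          (div_nonneg hp1.le (pow_nonneg hp0.le _)), ← ENNReal.ofReal_mul (hcnn n)]
        congr 1
        have hpne : p ≠ 0 := hp0.ne'
        have hp1ne : p - 1 ≠ 0 := hp1.ne'
        have h2 : 2 * n + 2 = (n + 1) + (n + 1) := by ring
        simp only [hc, h2, pow_add, mul_pow]
        field_simp
        ring
    _ = ENNReal.ofReal ((p / (p - 1)) * ∑' n : ℕ, β n * (p * B) ^ n) := by
        rw [← ENNReal.ofReal_tsum_of_nonneg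
          (fun n => mul_nonneg (div_nonneg hp0.le hp1.le)
            (mul_nonneg (hβ n) (pow_nonneg (mul_nonneg hp0.le hB) n)))
          (hQ.mul_left _)]
        rw [tsum_mul_left]
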